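/- Let G be a graph with Δ(G) ≥ 6 and L a list assignment with |L(v)| ≥ Δ(G) + 3. Suppose u is a degree-4 vertex all of whose four neighbors v₁, v₂, v₃, v₄ have degree 2, and the 1-path through v₄ ends at a vertex x with d(x) ≤ Δ(G) − 1. If G − {u, v₁, v₂, v₃, v₄} admits a 2-distance L-coloring, then G admits a 2-distance L-coloring. -/
import Mathlib


open SimpleGraph

/-- Maximum average degree: the supremum over all nonempty subgraphs `H` of `2|E(H)|/|V(H)|`. -/
noncomputable def mad {V : Type} [Fintype V] (G : SimpleGraph V) : ℝ :=
  sSup {x : ℝ | ∃ H : G.Subgraph, H.verts.Nonempty ∧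
    x = 2 * H.edgeSet.ncard / H.verts.ncard}

/-- Two distinct vertices are at distance at most 2. -/
def TwoDistAdj {V : Type} (G : SimpleGraph V) (u v : V) : Prop :=
  u ≠ v ∧ (G.Adj u v ∨ ∃ w, G.Adj u w ∧ G.Adj w v)

/-- `φ` is a 2-distance coloring of `G` from the lists `L`: each vertex gets a color from
its list and vertices at distance at most 2 get distinct colors. -/
def IsTwoDistListColoring {V : Type} (G : SimpleGraph V) (L : V → Finset ℕ) (φ : V → ℕ) :
    Prop :=
  (∀ v, φ v ∈ L v) ∧ ∀ u v, TwoDistAdj G u v → φ u ≠ φ v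

private lemma exists_color_aux (s F : Finset ℕ) (h : F.card < s.card) :
    ∃ c ∈ s, c ∉ F := by
  by_contra hc
  push_neg at hc
  exact absurd (Finset.card_le_card fun y hy => hc y hy) (by omega)

private lemma nbhd_pair_aux {V : Type} [Fintype V] [DecidableEq V] {G : SimpleGraph V}
    [DecidableRel G.Adj] {v a : V} (hd : G.degree v = 2) (ha : G.Adj v a) :
    ∃ w, w ≠ a ∧ G.Adj v w ∧ G.neighborFinset v = {a, w} := by
  have ham : a ∈ G.neighborFinset v := (G.mem_neighborFinset v a).mpr ha
  have hcard : ((G.neighborFinset v).erase a).card = 1 := by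
    rw [Finset.card_erase_of_mem ham, G.card_neighborFinset_eq_degree, hd]
  obtain ⟨w, hw⟩ := Finset.card_eq_one.mp hcard
  have hwm : w ∈ (G.neighborFinset v).erase a := hw ▸ Finset.mem_singleton_self w
  refine ⟨w, (Finset.mem_erase.mp hwm).1, (G.mem_neighborFinset v w).mp
    (Finset.mem_of_mem_erase hwm), ?_⟩
  rw [← Finset.insert_erase ham, hw]

private lemma card_insert_le_aux {a : ℕ} {s : Finset ℕ} {n : ℕ} (h : s.card ≤ n) :
    (insert a s).card ≤ n + 1 :=
  le_trans (Finset.card_insert_le a s) (by omega)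

set_option maxHeartbeats 1000000 in
/-- If `Δ(G) ≥ 6`, lists have size at least `Δ(G) + 3`, `u` is a 4-vertex all of whose
neighbors `v₁, v₂, v₃, v₄` have degree 2, and the 1-path through `v₄` ends at `x` with
`d(x) ≤ Δ(G) − 1`, then any 2-distance list coloring of `G − {u, v₁, v₂, v₃, v₄}`
extends to `G`. -/
theorem extend_coloring_1111_vertex
    {V : Type} [Fintype V] [DecidableEq V] (G : SimpleGraph V) [DecidableRel G.Adj]
    (hΔ : 6 ≤ G.maxDegree)
    (L : V → Finset ℕ) (hL : ∀ y, G.maxDegree + 3 ≤ (L y).card)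
    (u v₁ v₂ v₃ v₄ x : V) (hdu : G.degree u = 4)
    (h1 : G.Adj u v₁) (h2 : G.Adj u v₂) (h3 : G.Adj u v₃) (h4 : G.Adj u v₄)
    (h12 : v₁ ≠ v₂) (h13 : v₁ ≠ v₃) (h14 : v₁ ≠ v₄)
    (h23 : v₂ ≠ v₃) (h24 : v₂ ≠ v₄) (h34 : v₃ ≠ v₄)
    (hd1 : G.degree v₁ = 2) (hd2 : G.degree v₂ = 2)
    (hd3 : G.degree v₃ = 2) (hd4 : G.degree v₄ = 2)
    (hwx : G.Adj v₄ x) (hxu : x ≠ u) (hdx : G.degree x ≤ G.maxDegree - 1)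
    (hcol : ∃ φ, IsTwoDistListColoring
      (G.induce {y | y ≠ u ∧ y ≠ v₁ ∧ y ≠ v₂ ∧ y ≠ v₃ ∧ y ≠ v₄})
      (fun y => L y.1) φ) :
    ∃ φ : V → ℕ, IsTwoDistListColoring G L φ := by
  classical
  obtain ⟨φ, hφmem, hφdist⟩ := hcol
  obtain ⟨w₁, hw₁u, haw₁, hN1⟩ := nbhd_pair_aux hd1 h1.symm
  obtain ⟨w₂, hw₂u, haw₂, hN2⟩ := nbhd_pair_aux hd2 h2.symm
  obtain ⟨w₃, hw₃u, haw₃, hN3⟩ := nbhd_pair_aux hd3 h3.symm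
  have hN4 : G.neighborFinset v₄ = {u, x} := by
    obtain ⟨w₄, hw₄u, haw₄, hN4'⟩ := nbhd_pair_aux hd4 h4.symm
    have hx : x ∈ G.neighborFinset v₄ := (G.mem_neighborFinset _ _).mpr hwx
    rw [hN4'] at hx
    rcases Finset.mem_insert.mp hx with h | h
    · exact absurd h hxu
    · rw [hN4', Finset.mem_singleton.mp h]
  have hNu : G.neighborFinset u = {v₁, v₂, v₃, v₄} := by
    have hsub : ({v₁, v₂, v₃, v₄} : Finset V) ⊆ G.neighborFinset u := by
      intro y hy
      simp only [Finset.mem_insert, Finset.mem_singleton] at hy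
      rcases hy with rfl | rfl | rfl | rfl
      exacts [(G.mem_neighborFinset _ _).mpr h1, (G.mem_neighborFinset _ _).mpr h2,
        (G.mem_neighborFinset _ _).mpr h3, (G.mem_neighborFinset _ _).mpr h4]
    have hc4 : ({v₁, v₂, v₃, v₄} : Finset V).card = 4 := by
      rw [show ({v₁, v₂, v₃, v₄} : Finset V) = insert v₁ (insert v₂ (insert v₃ {v₄})) from rfl,
        Finset.card_insert_of_notMem (by simp [h12, h13, h14]),
        Finset.card_insert_of_notMem (by simp [h23, h24]),
        Finset.card_insert_of_notMem (by simp [h34]), Finset.card_singleton]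
    exact (Finset.eq_of_subset_of_card_le hsub
      (by rw [G.card_neighborFinset_eq_degree, hdu, hc4])).symm
  have tsymm : ∀ a b, TwoDistAdj G a b → TwoDistAdj G b a := by
    rintro a b ⟨hne, h | ⟨m, hm1, hm2⟩⟩
    · exact ⟨hne.symm, Or.inl h.symm⟩
    · exact ⟨hne.symm, Or.inr ⟨m, hm2.symm, hm1.symm⟩⟩
  have tw : ∀ v w b : V, G.neighborFinset v = {u, w} → TwoDistAdj G v b →
      b = u ∨ b = v₁ ∨ b = v₂ ∨ b = v₃ ∨ b = v₄ ∨ b = w ∨ b ∈ G.neighborFinset w := by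
    rintro v w b hN ⟨hne, h | ⟨m, hm1, hm2⟩⟩
    · have hb : b ∈ ({u, w} : Finset V) := hN ▸ (G.mem_neighborFinset v b).mpr h
      simp only [Finset.mem_insert, Finset.mem_singleton] at hb
      tauto
    · have hm : m ∈ ({u, w} : Finset V) := hN ▸ (G.mem_neighborFinset v m).mpr hm1
      simp only [Finset.mem_insert, Finset.mem_singleton] at hm
      rcases hm with rfl | rfl
      · have hb : b ∈ ({v₁, v₂, v₃, v₄} : Finset V) :=
          hNu ▸ (G.mem_neighborFinset _ _).mpr hm2
        simp only [Finset.mem_insert, Finset.mem_singleton] at hb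
        tauto
      · exact Or.inr (Or.inr (Or.inr (Or.inr (Or.inr (Or.inr
          ((G.mem_neighborFinset _ _).mpr hm2))))))
  have twu : ∀ b, TwoDistAdj G u b →
      b = v₁ ∨ b = v₂ ∨ b = v₃ ∨ b = v₄ ∨ b = w₁ ∨ b = w₂ ∨ b = w₃ ∨ b = x := by
    rintro b ⟨hne, h | ⟨m, hm1, hm2⟩⟩
    · have hb : b ∈ ({v₁, v₂, v₃, v₄} : Finset V) :=
        hNu ▸ (G.mem_neighborFinset _ _).mpr h
      simp only [Finset.mem_insert, Finset.mem_singleton] at hb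
      tauto
    · have hm : m ∈ ({v₁, v₂, v₃, v₄} : Finset V) :=
        hNu ▸ (G.mem_neighborFinset _ _).mpr hm1
      simp only [Finset.mem_insert, Finset.mem_singleton] at hm
      have hb : ∀ w' : V, G.neighborFinset m = {u, w'} → b = w' := by
        intro w' hNm
        have hbm : b ∈ ({u, w'} : Finset V) := hNm ▸ (G.mem_neighborFinset _ _).mpr hm2
        simp only [Finset.mem_insert, Finset.mem_singleton] at hbm
        rcases hbm with rfl | rfl
        · exact absurd rfl hne
        · rfl
      rcases hm with rfl | rfl | rfl | rfl
      · exact Or.inr (Or.inr (Or.inr (Or.inr (Or.inl (hb w₁ hN1)))))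
      · exact Or.inr (Or.inr (Or.inr (Or.inr (Or.inr (Or.inl (hb w₂ hN2))))))
      · exact Or.inr (Or.inr (Or.inr (Or.inr (Or.inr (Or.inr (Or.inl (hb w₃ hN3)))))))
      · exact Or.inr (Or.inr (Or.inr (Or.inr (Or.inr (Or.inr (Or.inr (hb x hN4)))))))
  -- the base coloring, extended by junk outside the removed set
  set φ₀ : V → ℕ := fun y =>
    if h : y ≠ u ∧ y ≠ v₁ ∧ y ≠ v₂ ∧ y ≠ v₃ ∧ y ≠ v₄ then φ ⟨y, h⟩ else 0 with hφ₀def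
  have φ₀eq : ∀ (y : V) (h : y ≠ u ∧ y ≠ v₁ ∧ y ≠ v₂ ∧ y ≠ v₃ ∧ y ≠ v₄),
      φ₀ y = φ ⟨y, h⟩ := by
    intro y h
    rw [hφ₀def]
    exact dif_pos h
  -- cardinality of the basic forbidden blocks
  have hdw : ∀ w' v' : V, G.Adj v' w' →
      (insert (φ₀ w') (((G.neighborFinset w').erase v').image φ₀)).card ≤ G.degree w' := by
    intro w' v' hadj
    have hvm : v' ∈ G.neighborFinset w' := (G.mem_neighborFinset _ _).mpr hadj.symm
    have h1' : (((G.neighborFinset w').erase v').image φ₀).card ≤ G.degree w' - 1 := by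
      refine le_trans Finset.card_image_le ?_
      rw [Finset.card_erase_of_mem hvm, G.card_neighborFinset_eq_degree]
    have h2' : 1 ≤ G.degree w' := by
      rw [← G.card_neighborFinset_eq_degree]
      exact Finset.card_pos.mpr ⟨v', hvm⟩
    have := Finset.card_insert_le (φ₀ w') (((G.neighborFinset w').erase v').image φ₀)
    omega
  -- choose the five new colors greedily
  set F₁ : Finset ℕ :=
    insert (φ₀ w₁) (((G.neighborFinset w₁).erase v₁).image φ₀) with hF₁def
  have hF₁card : F₁.card ≤ G.maxDegree := by
    rw [hF₁def]; exact le_trans (hdw w₁ v₁ haw₁) (G.degree_le_maxDegree w₁)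
  obtain ⟨c₁, hc₁L, hc₁F⟩ := exists_color_aux (L v₁) F₁ (by have := hL v₁; omega)
  set F₂ : Finset ℕ :=
    insert c₁ (insert (φ₀ w₂) (((G.neighborFinset w₂).erase v₂).image φ₀)) with hF₂def
  have hF₂card : F₂.card ≤ G.maxDegree + 1 := by
    rw [hF₂def]
    exact card_insert_le_aux (le_trans (hdw w₂ v₂ haw₂) (G.degree_le_maxDegree w₂))
  obtain ⟨c₂, hc₂L, hc₂F⟩ := exists_color_aux (L v₂) F₂ (by have := hL v₂; omega)
  set F₃ : Finset ℕ :=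
    insert c₁ (insert c₂ (insert (φ₀ w₃) (((G.neighborFinset w₃).erase v₃).image φ₀)))
    with hF₃def
  have hF₃card : F₃.card ≤ G.maxDegree + 2 := by
    rw [hF₃def]
    exact card_insert_le_aux (card_insert_le_aux
      (le_trans (hdw w₃ v₃ haw₃) (G.degree_le_maxDegree w₃)))
  obtain ⟨c₃, hc₃L, hc₃F⟩ := exists_color_aux (L v₃) F₃ (by have := hL v₃; omega)
  set F₄ : Finset ℕ :=
    insert c₁ (insert c₂ (insert c₃
      (insert (φ₀ x) (((G.neighborFinset x).erase v₄).image φ₀)))) with hF₄def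
  have hF₄card : F₄.card ≤ G.maxDegree + 2 := by
    have hx : (insert (φ₀ x) (((G.neighborFinset x).erase v₄).image φ₀)).card
        ≤ G.maxDegree - 1 := le_trans (hdw x v₄ hwx) hdx
    have h3' : F₄.card ≤ G.maxDegree - 1 + 1 + 1 + 1 := by
      rw [hF₄def]
      exact card_insert_le_aux (card_insert_le_aux (card_insert_le_aux hx))
    omega
  obtain ⟨c₄, hc₄L, hc₄F⟩ := exists_color_aux (L v₄) F₄ (by have := hL v₄; omega)
  set Fu : Finset ℕ :=
    {c₁, c₂, c₃, c₄, φ₀ w₁, φ₀ w₂, φ₀ w₃, φ₀ x} with hFudef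
  have hFucard : Fu.card ≤ 8 := by
    rw [hFudef]
    exact card_insert_le_aux (card_insert_le_aux (card_insert_le_aux (card_insert_le_aux
      (card_insert_le_aux (card_insert_le_aux (card_insert_le_aux
        (Finset.card_singleton _).le))))))
  obtain ⟨cu, hcuL, hcuF⟩ := exists_color_aux (L u) Fu (by have := hL u; omega)
  -- the extended coloring
  set ψ : V → ℕ := fun y =>
    if y = u then cu else if y = v₁ then c₁ else if y = v₂ then c₂ else
    if y = v₃ then c₃ else if y = v₄ then c₄ else φ₀ y with hψdef
  have ψu : ψ u = cu := by simp [hψdef]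
  have ψ1 : ψ v₁ = c₁ := by simp [hψdef, h1.ne']
  have ψ2 : ψ v₂ = c₂ := by simp [hψdef, h2.ne', Ne.symm h12]
  have ψ3 : ψ v₃ = c₃ := by simp [hψdef, h3.ne', Ne.symm h13, Ne.symm h23]
  have ψ4 : ψ v₄ = c₄ := by simp [hψdef, h4.ne', Ne.symm h14, Ne.symm h24, Ne.symm h34]
  have ψout : ∀ y : V, y ≠ u → y ≠ v₁ → y ≠ v₂ → y ≠ v₃ → y ≠ v₄ → ψ y = φ₀ y := by
    intro y hy1 hy2 hy3 hy4 hy5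
    simp [hψdef, hy1, hy2, hy3, hy4, hy5]
  -- key claims: colors of 2-neighbors land in the forbidden sets
  have keyu : ∀ b, TwoDistAdj G u b → ψ b ∈ Fu := by
    intro b hb
    have h8 := twu b hb
    by_cases hb1 : b = v₁
    · rw [hb1, ψ1]; simp [hFudef]
    by_cases hb2 : b = v₂
    · rw [hb2, ψ2]; simp [hFudef]
    by_cases hb3 : b = v₃
    · rw [hb3, ψ3]; simp [hFudef]
    by_cases hb4 : b = v₄
    · rw [hb4, ψ4]; simp [hFudef]
    have hbu : b ≠ u := fun h => hb.1 h.symm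
    rw [ψout b hbu hb1 hb2 hb3 hb4]
    rcases h8 with rfl | rfl | rfl | rfl | rfl | rfl | rfl | rfl
    · exact absurd rfl hb1
    · exact absurd rfl hb2
    · exact absurd rfl hb3
    · exact absurd rfl hb4
    · simp [hFudef]
    · simp [hFudef]
    · simp [hFudef]
    · simp [hFudef]
  have key1 : ∀ b, TwoDistAdj G v₁ b → b ≠ u → b ≠ v₂ → b ≠ v₃ → b ≠ v₄ → ψ b ∈ F₁ := by
    intro b hb hbu hb2 hb3 hb4
    have hb1 : b ≠ v₁ := fun h => hb.1 h.symm
    rw [ψout b hbu hb1 hb2 hb3 hb4]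
    rcases tw v₁ w₁ b hN1 hb with rfl | rfl | rfl | rfl | rfl | rfl | hbm
    · exact absurd rfl hbu
    · exact absurd rfl hb1
    · exact absurd rfl hb2
    · exact absurd rfl hb3
    · exact absurd rfl hb4
    · rw [hF₁def]; exact Finset.mem_insert_self _ _
    · rw [hF₁def]
      exact Finset.mem_insert_of_mem
        (Finset.mem_image_of_mem φ₀ (Finset.mem_erase.mpr ⟨hb1, hbm⟩))
  have key2 : ∀ b, TwoDistAdj G v₂ b → b ≠ u → b ≠ v₃ → b ≠ v₄ → ψ b ∈ F₂ := by
    intro b hb hbu hb3 hb4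
    have hb2 : b ≠ v₂ := fun h => hb.1 h.symm
    by_cases hb1 : b = v₁
    · rw [hb1, ψ1, hF₂def]; exact Finset.mem_insert_self _ _
    rw [ψout b hbu hb1 hb2 hb3 hb4]
    rcases tw v₂ w₂ b hN2 hb with rfl | rfl | rfl | rfl | rfl | rfl | hbm
    · exact absurd rfl hbu
    · exact absurd rfl hb1
    · exact absurd rfl hb2
    · exact absurd rfl hb3
    · exact absurd rfl hb4
    · rw [hF₂def]; exact Finset.mem_insert_of_mem (Finset.mem_insert_self _ _)
    · rw [hF₂def]
      exact Finset.mem_insert_of_mem (Finset.mem_insert_of_mem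
        (Finset.mem_image_of_mem φ₀ (Finset.mem_erase.mpr ⟨hb2, hbm⟩)))
  have key3 : ∀ b, TwoDistAdj G v₃ b → b ≠ u → b ≠ v₄ → ψ b ∈ F₃ := by
    intro b hb hbu hb4
    have hb3 : b ≠ v₃ := fun h => hb.1 h.symm
    by_cases hb1 : b = v₁
    · rw [hb1, ψ1, hF₃def]; exact Finset.mem_insert_self _ _
    by_cases hb2 : b = v₂
    · rw [hb2, ψ2, hF₃def]
      exact Finset.mem_insert_of_mem (Finset.mem_insert_self _ _)
    rw [ψout b hbu hb1 hb2 hb3 hb4]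
    rcases tw v₃ w₃ b hN3 hb with rfl | rfl | rfl | rfl | rfl | rfl | hbm
    · exact absurd rfl hbu
    · exact absurd rfl hb1
    · exact absurd rfl hb2
    · exact absurd rfl hb3
    · exact absurd rfl hb4
    · rw [hF₃def]
      exact Finset.mem_insert_of_mem (Finset.mem_insert_of_mem (Finset.mem_insert_self _ _))
    · rw [hF₃def]
      exact Finset.mem_insert_of_mem (Finset.mem_insert_of_mem (Finset.mem_insert_of_mem
        (Finset.mem_image_of_mem φ₀ (Finset.mem_erase.mpr ⟨hb3, hbm⟩))))
  have key4 : ∀ b, TwoDistAdj G v₄ b → b ≠ u → ψ b ∈ F₄ := by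
    intro b hb hbu
    have hb4 : b ≠ v₄ := fun h => hb.1 h.symm
    by_cases hb1 : b = v₁
    · rw [hb1, ψ1, hF₄def]; exact Finset.mem_insert_self _ _
    by_cases hb2 : b = v₂
    · rw [hb2, ψ2, hF₄def]
      exact Finset.mem_insert_of_mem (Finset.mem_insert_self _ _)
    by_cases hb3 : b = v₃
    · rw [hb3, ψ3, hF₄def]
      exact Finset.mem_insert_of_mem (Finset.mem_insert_of_mem (Finset.mem_insert_self _ _))
    rw [ψout b hbu hb1 hb2 hb3 hb4]
    rcases tw v₄ x b hN4 hb with rfl | rfl | rfl | rfl | rfl | rfl | hbm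
    · exact absurd rfl hbu
    · exact absurd rfl hb1
    · exact absurd rfl hb2
    · exact absurd rfl hb3
    · exact absurd rfl hb4
    · rw [hF₄def]
      exact Finset.mem_insert_of_mem (Finset.mem_insert_of_mem (Finset.mem_insert_of_mem
        (Finset.mem_insert_self _ _)))
    · rw [hF₄def]
      exact Finset.mem_insert_of_mem (Finset.mem_insert_of_mem (Finset.mem_insert_of_mem
        (Finset.mem_insert_of_mem
          (Finset.mem_image_of_mem φ₀ (Finset.mem_erase.mpr ⟨hb4, hbm⟩)))))
  -- old vertices keep different colors
  have keyout : ∀ a b, TwoDistAdj G a b →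
      ∀ (ha : a ≠ u ∧ a ≠ v₁ ∧ a ≠ v₂ ∧ a ≠ v₃ ∧ a ≠ v₄)
        (hb : b ≠ u ∧ b ≠ v₁ ∧ b ≠ v₂ ∧ b ≠ v₃ ∧ b ≠ v₄), φ₀ a ≠ φ₀ b := by
    intro a b hab ha hb
    rw [φ₀eq a ha, φ₀eq b hb]
    apply hφdist ⟨a, ha⟩ ⟨b, hb⟩
    refine ⟨fun h => hab.1 (congrArg Subtype.val h), ?_⟩
    rcases hab.2 with h | ⟨m, hm1, hm2⟩
    · exact Or.inl h
    · have hmid : ∀ v' w' : V, G.neighborFinset v' = {u, w'} → m ≠ v' := by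
        rintro v' w' hN rfl
        have haN : a ∈ ({u, w'} : Finset V) := hN ▸ (G.mem_neighborFinset _ _).mpr hm1.symm
        have hbN : b ∈ ({u, w'} : Finset V) := hN ▸ (G.mem_neighborFinset _ _).mpr hm2
        simp only [Finset.mem_insert, Finset.mem_singleton] at haN hbN
        rcases haN with rfl | rfl
        · exact ha.1 rfl
        · rcases hbN with rfl | rfl
          · exact hb.1 rfl
          · exact hab.1 rfl
      have hmP : m ≠ u ∧ m ≠ v₁ ∧ m ≠ v₂ ∧ m ≠ v₃ ∧ m ≠ v₄ := by
        refine ⟨?_, hmid v₁ w₁ hN1, hmid v₂ w₂ hN2, hmid v₃ w₃ hN3, hmid v₄ x hN4⟩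
        rintro rfl
        have haN : a ∈ ({v₁, v₂, v₃, v₄} : Finset V) :=
          hNu ▸ (G.mem_neighborFinset _ _).mpr hm1.symm
        simp only [Finset.mem_insert, Finset.mem_singleton] at haN
        rcases haN with rfl | rfl | rfl | rfl
        · exact ha.2.1 rfl
        · exact ha.2.2.1 rfl
        · exact ha.2.2.2.1 rfl
        · exact ha.2.2.2.2 rfl
      exact Or.inr ⟨⟨m, hmP⟩, hm1, hm2⟩
  refine ⟨ψ, ?_, ?_⟩
  · -- colors come from the lists
    intro y
    by_cases hy1 : y = u
    · rw [hy1, ψu]; exact hcuL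
    by_cases hy2 : y = v₁
    · rw [hy2, ψ1]; exact hc₁L
    by_cases hy3 : y = v₂
    · rw [hy3, ψ2]; exact hc₂L
    by_cases hy4 : y = v₃
    · rw [hy4, ψ3]; exact hc₃L
    by_cases hy5 : y = v₄
    · rw [hy5, ψ4]; exact hc₄L
    rw [ψout y hy1 hy2 hy3 hy4 hy5, φ₀eq y ⟨hy1, hy2, hy3, hy4, hy5⟩]
    exact hφmem ⟨y, hy1, hy2, hy3, hy4, hy5⟩
  · -- properness
    intro a b hab
    by_cases hau : a = u
    · subst hau
      rw [ψu]
      exact fun h => hcuF (h.symm ▸ keyu b hab)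
    by_cases hav1 : a = v₁
    · subst hav1
      by_cases hbu : b = u
      · subst hbu
        rw [ψ1, ψu]
        exact fun h => hcuF (h ▸ (show c₁ ∈ Fu by simp [hFudef]))
      by_cases hbv2 : b = v₂
      · subst hbv2
        rw [ψ1, ψ2]
        exact fun h => hc₂F (h ▸ (show c₁ ∈ F₂ by simp [hF₂def]))
      by_cases hbv3 : b = v₃
      · subst hbv3
        rw [ψ1, ψ3]
        exact fun h => hc₃F (h ▸ (show c₁ ∈ F₃ by simp [hF₃def]))
      by_cases hbv4 : b = v₄
      · subst hbv4
        rw [ψ1, ψ4]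
        exact fun h => hc₄F (h ▸ (show c₁ ∈ F₄ by simp [hF₄def]))
      rw [ψ1]
      exact fun h => hc₁F (h.symm ▸ key1 b hab hbu hbv2 hbv3 hbv4)
    by_cases hav2 : a = v₂
    · subst hav2
      by_cases hbu : b = u
      · subst hbu
        rw [ψ2, ψu]
        exact fun h => hcuF (h ▸ (show c₂ ∈ Fu by simp [hFudef]))
      by_cases hbv1 : b = v₁
      · subst hbv1
        rw [ψ2, ψ1]
        exact fun h => hc₂F (h.symm ▸ (show c₁ ∈ F₂ by simp [hF₂def]))
      by_cases hbv3 : b = v₃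
      · subst hbv3
        rw [ψ2, ψ3]
        exact fun h => hc₃F (h ▸ (show c₂ ∈ F₃ by simp [hF₃def]))
      by_cases hbv4 : b = v₄
      · subst hbv4
        rw [ψ2, ψ4]
        exact fun h => hc₄F (h ▸ (show c₂ ∈ F₄ by simp [hF₄def]))
      rw [ψ2]
      exact fun h => hc₂F (h.symm ▸ key2 b hab hbu hbv3 hbv4)
    by_cases hav3 : a = v₃
    · subst hav3
      by_cases hbu : b = u
      · subst hbu
        rw [ψ3, ψu]
        exact fun h => hcuF (h ▸ (show c₃ ∈ Fu by simp [hFudef]))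
      by_cases hbv1 : b = v₁
      · subst hbv1
        rw [ψ3, ψ1]
        exact fun h => hc₃F (h.symm ▸ (show c₁ ∈ F₃ by simp [hF₃def]))
      by_cases hbv2 : b = v₂
      · subst hbv2
        rw [ψ3, ψ2]
        exact fun h => hc₃F (h.symm ▸ (show c₂ ∈ F₃ by simp [hF₃def]))
      by_cases hbv4 : b = v₄
      · subst hbv4
        rw [ψ3, ψ4]
        exact fun h => hc₄F (h ▸ (show c₃ ∈ F₄ by simp [hF₄def]))
      rw [ψ3]
      exact fun h => hc₃F (h.symm ▸ key3 b hab hbu hbv4)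
    by_cases hav4 : a = v₄
    · subst hav4
      by_cases hbu : b = u
      · subst hbu
        rw [ψ4, ψu]
        exact fun h => hcuF (h ▸ (show c₄ ∈ Fu by simp [hFudef]))
      by_cases hbv1 : b = v₁
      · subst hbv1
        rw [ψ4, ψ1]
        exact fun h => hc₄F (h.symm ▸ (show c₁ ∈ F₄ by simp [hF₄def]))
      by_cases hbv2 : b = v₂
      · subst hbv2
        rw [ψ4, ψ2]
        exact fun h => hc₄F (h.symm ▸ (show c₂ ∈ F₄ by simp [hF₄def]))
      by_cases hbv3 : b = v₃
      · subst hbv3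
        rw [ψ4, ψ3]
        exact fun h => hc₄F (h.symm ▸ (show c₃ ∈ F₄ by simp [hF₄def]))
      rw [ψ4]
      exact fun h => hc₄F (h.symm ▸ key4 b hab hbu)
    -- a is an old vertex
    have haP : a ≠ u ∧ a ≠ v₁ ∧ a ≠ v₂ ∧ a ≠ v₃ ∧ a ≠ v₄ := ⟨hau, hav1, hav2, hav3, hav4⟩
    by_cases hbu : b = u
    · subst hbu
      rw [ψu]
      exact fun h => hcuF (h ▸ keyu a (tsymm _ _ hab))
    by_cases hbv1 : b = v₁
    · subst hbv1
      rw [ψ1]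
      exact fun h => hc₁F (h ▸ key1 a (tsymm _ _ hab) hau hav2 hav3 hav4)
    by_cases hbv2 : b = v₂
    · subst hbv2
      rw [ψ2]
      exact fun h => hc₂F (h ▸ key2 a (tsymm _ _ hab) hau hav3 hav4)
    by_cases hbv3 : b = v₃
    · subst hbv3
      rw [ψ3]
      exact fun h => hc₃F (h ▸ key3 a (tsymm _ _ hab) hau hav4)
    by_cases hbv4 : b = v₄
    · subst hbv4
      rw [ψ4]
      exact fun h => hc₄F (h ▸ key4 a (tsymm _ _ hab) hau)
    have hbP : b ≠ u ∧ b ≠ v₁ ∧ b ≠ v₂ ∧ b ≠ v₃ ∧ b ≠ v₄ := ⟨hbu, hbv1, hbv2, hbv3, hbv4⟩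
    rw [ψout a hau hav1 hav2 hav3 hav4, ψout b hbu hbv1 hbv2 hbv3 hbv4]
    exact keyout a b hab haP hbP
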